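/- arXiv:2601.11016 — 4 statements merged into one kernel-verified Lean document; each statement's English description precedes it below -/
import Mathlib

section
/- Consider a soft regression tree of depth D on ℝ^{d_x}, a leaf l whose root-to-leaf path contains at most D−1 internal nodes (i.e. |Λ(l)| ≤ D−1), and suppose ‖w_i‖ ≤ W for every internal node i ∈ Λ(l), where ‖·‖ is the Euclidean norm. Then for every x ∈ ℝ^{d_x}, the spectral (operator) norm of the Hessian of the route probability satisfies ‖∇²p_l(x)‖₂ ≤ p_l(x) · [ (D−1)² W² + (1/4)(D−1) W² ]. -/
open scoped BigOperators

noncomputable def sigmoid (z : ℝ) : ℝ := 1 / (1 + Real.exp (-z))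

noncomputable def pathProb {dx : ℕ} {ι : Type*} [Fintype ι]
    (w : ι → EuclideanSpace ℝ (Fin dx)) (b : ι → ℝ) (side : ι → Bool)
    (x : EuclideanSpace ℝ (Fin dx)) : ℝ :=
  ∏ i, if side i then sigmoid ((inner ℝ (w i) x : ℝ) + b i)
       else 1 - sigmoid ((inner ℝ (w i) x : ℝ) + b i)

noncomputable def sig' (z : ℝ) : ℝ := sigmoid z * (1 - sigmoid z)

lemma one_add_exp_pos (z : ℝ) : 0 < 1 + Real.exp (-z) := by positivity

lemma sigmoid_pos (z : ℝ) : 0 < sigmoid z := by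
  unfold sigmoid; positivity

lemma sigmoid_lt_one (z : ℝ) : sigmoid z < 1 := by
  unfold sigmoid
  rw [div_lt_one (one_add_exp_pos z)]
  linarith [Real.exp_pos (-z)]

lemma hasDerivAt_sigmoid (z : ℝ) : HasDerivAt sigmoid (sig' z) z := by
  have h1 : HasDerivAt (fun t : ℝ => 1 + Real.exp (-t)) (-Real.exp (-z)) z := by
    simpa using (((hasDerivAt_id z).neg).exp).const_add 1
  have h2 : HasDerivAt (fun t : ℝ => 1 / (1 + Real.exp (-t)))
      ((0 * (1 + Real.exp (-z)) - 1 * (-Real.exp (-z))) / (1 + Real.exp (-z)) ^ 2) z :=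
    (hasDerivAt_const z 1).div h1 (ne_of_gt (one_add_exp_pos z))
  convert h2 using 1
  · rfl
  unfold sig' sigmoid
  have h := (one_add_exp_pos z).ne'
  field_simp
  ring

lemma hasDerivAt_sig' (z : ℝ) :
    HasDerivAt sig' (sig' z * (1 - 2 * sigmoid z)) z := by
  have h := (hasDerivAt_sigmoid z).mul ((hasDerivAt_sigmoid z).const_sub 1)
  refine h.congr_deriv ?_
  unfold sig'
  ring

section Helpers

variable {dx : ℕ} {ι : Type*} [Fintype ι]
  (w : ι → EuclideanSpace ℝ (Fin dx)) (b : ι → ℝ) (side : ι → Bool)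

noncomputable def Zf (i : ι) (y : EuclideanSpace ℝ (Fin dx)) : ℝ :=
  (inner ℝ (w i) y : ℝ) + b i

noncomputable def Gf (i : ι) (y : EuclideanSpace ℝ (Fin dx)) : ℝ :=
  if side i then sigmoid (Zf w b i y) else 1 - sigmoid (Zf w b i y)

noncomputable def epsf (i : ι) : ℝ := if side i then 1 else -1

noncomputable def Dvf (i : ι) (y : EuclideanSpace ℝ (Fin dx)) : ℝ :=
  epsf side i * sig' (Zf w b i y)

noncomputable def Evf (i : ι) (y : EuclideanSpace ℝ (Fin dx)) : ℝ :=
  epsf side i * (sig' (Zf w b i y) * (1 - 2 * sigmoid (Zf w b i y)))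

noncomputable def af (i : ι) : EuclideanSpace ℝ (Fin dx) →L[ℝ] ℝ := innerSL ℝ (w i)

lemma pathProb_eq : pathProb w b side = fun y => ∏ i, Gf w b side i y := rfl

lemma hasFDerivAt_Zf (i : ι) (x : EuclideanSpace ℝ (Fin dx)) :
    HasFDerivAt (Zf w b i) (af w i) x := by
  have h := ((innerSL ℝ (w i)).hasFDerivAt (x := x)).add_const (b i)
  exact h

lemma hasFDerivAt_Gf (i : ι) (x : EuclideanSpace ℝ (Fin dx)) :
    HasFDerivAt (Gf w b side i) (Dvf w b side i x • af w i) x := by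
  have hz := hasFDerivAt_Zf w b i x
  have hsig : HasFDerivAt (fun y => sigmoid (Zf w b i y))
      (sig' (Zf w b i x) • af w i) x :=
    (hasDerivAt_sigmoid (Zf w b i x)).comp_hasFDerivAt x hz
  cases hsi : side i with
  | true =>
    have : Gf w b side i = fun y => sigmoid (Zf w b i y) := by
      funext y; simp [Gf, hsi]
    rw [this]
    have : Dvf w b side i x = sig' (Zf w b i x) := by simp [Dvf, epsf, hsi]
    rw [this]; exact hsig
  | false =>
    have hg : Gf w b side i = fun y => 1 - sigmoid (Zf w b i y) := by
      funext y; simp [Gf, hsi]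
    rw [hg]
    have hd : Dvf w b side i x • af w i = -(sig' (Zf w b i x) • af w i) := by
      simp [Dvf, epsf, hsi, neg_smul]
      exact neg_smul (sig' (Zf w b i x)) (af w i)
    rw [hd]
    exact hsig.const_sub 1

lemma hasFDerivAt_Dvf (i : ι) (x : EuclideanSpace ℝ (Fin dx)) :
    HasFDerivAt (Dvf w b side i) (Evf w b side i x • af w i) x := by
  have hz := hasFDerivAt_Zf w b i x
  have h := ((hasDerivAt_sig' (Zf w b i x)).comp_hasFDerivAt x hz).const_mul (epsf side i)
  have he : Evf w b side i x • af w i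
      = epsf side i • ((sig' (Zf w b i x) * (1 - 2 * sigmoid (Zf w b i x))) • af w i) := by
    rw [smul_smul]; rfl
  rw [he]
  exact h

end Helpers

section Deriv

variable {dx : ℕ} {ι : Type*} [Fintype ι] [DecidableEq ι]
  (w : ι → EuclideanSpace ℝ (Fin dx)) (b : ι → ℝ) (side : ι → Bool)

noncomputable def Fd (y : EuclideanSpace ℝ (Fin dx)) : EuclideanSpace ℝ (Fin dx) →L[ℝ] ℝ :=
  ∑ i, ((∏ j ∈ Finset.univ.erase i, Gf w b side j y) * Dvf w b side i y) • af w i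

noncomputable def Pd (x : EuclideanSpace ℝ (Fin dx)) (i : ι) :
    EuclideanSpace ℝ (Fin dx) →L[ℝ] ℝ :=
  ∑ k ∈ Finset.univ.erase i,
    ((∏ j ∈ (Finset.univ.erase i).erase k, Gf w b side j x) * Dvf w b side k x) • af w k

noncomputable def Cd (x : EuclideanSpace ℝ (Fin dx)) (i : ι) :
    EuclideanSpace ℝ (Fin dx) →L[ℝ] ℝ :=
  (∏ j ∈ Finset.univ.erase i, Gf w b side j x) • (Evf w b side i x • af w i) +
    Dvf w b side i x • Pd w b side x i

lemma hasFDerivAt_pathProb (y : EuclideanSpace ℝ (Fin dx)) :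
    HasFDerivAt (pathProb w b side) (Fd w b side y) y := by
  have h := HasFDerivAt.finset_prod (u := (Finset.univ : Finset ι))
      (fun i _ => hasFDerivAt_Gf w b side i y)
  rw [pathProb_eq]
  refine h.congr_fderiv ?_
  exact Finset.sum_congr rfl fun i _ => smul_smul _ _ _

lemma hasFDerivAt_prod_erase (i : ι) (x : EuclideanSpace ℝ (Fin dx)) :
    HasFDerivAt (fun y => ∏ j ∈ Finset.univ.erase i, Gf w b side j y)
      (Pd w b side x i) x := by
  have h := HasFDerivAt.finset_prod (u := Finset.univ.erase i)
      (fun k _ => hasFDerivAt_Gf w b side k x)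
  refine h.congr_fderiv ?_
  exact Finset.sum_congr rfl fun k _ => smul_smul _ _ _

lemma hasFDerivAt_Fd (x : EuclideanSpace ℝ (Fin dx)) :
    HasFDerivAt (Fd w b side) (∑ i, (Cd w b side x i).smulRight (af w i)) x := by
  have hc : ∀ i : ι, HasFDerivAt
      (fun y => (∏ j ∈ Finset.univ.erase i, Gf w b side j y) * Dvf w b side i y)
      (Cd w b side x i) x := fun i =>
    (hasFDerivAt_prod_erase w b side i x).mul (hasFDerivAt_Dvf w b side i x)
  exact HasFDerivAt.fun_sum (fun i _ => (hc i).smul_const (af w i))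

lemma fderiv_fderiv_pathProb (x : EuclideanSpace ℝ (Fin dx)) :
    fderiv ℝ (fun y => fderiv ℝ (pathProb w b side) y) x
      = ∑ i, (Cd w b side x i).smulRight (af w i) := by
  have h1 : (fun y => fderiv ℝ (pathProb w b side) y) = Fd w b side :=
    funext fun y => (hasFDerivAt_pathProb w b side y).fderiv
  rw [h1, (hasFDerivAt_Fd w b side x).fderiv]

end Deriv

section Bounds

variable {dx : ℕ} {ι : Type*} [Fintype ι]
  (w : ι → EuclideanSpace ℝ (Fin dx)) (b : ι → ℝ) (side : ι → Bool)

lemma sig'_nonneg (z : ℝ) : 0 ≤ sig' z := by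
  have h1 := sigmoid_pos z
  have h2 := sigmoid_lt_one z
  unfold sig'; nlinarith

lemma Gf_pos (i : ι) (x : EuclideanSpace ℝ (Fin dx)) : 0 < Gf w b side i x := by
  have h1 := sigmoid_pos (Zf w b i x)
  have h2 := sigmoid_lt_one (Zf w b i x)
  unfold Gf; split <;> linarith

lemma Gf_le_one (i : ι) (x : EuclideanSpace ℝ (Fin dx)) : Gf w b side i x ≤ 1 := by
  have h1 := sigmoid_pos (Zf w b i x)
  have h2 := sigmoid_lt_one (Zf w b i x)
  unfold Gf; split <;> linarith

lemma abs_epsf (i : ι) : |epsf side i| = 1 := by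
  unfold epsf; split <;> simp

lemma abs_Dvf_le (i : ι) (x : EuclideanSpace ℝ (Fin dx)) :
    |Dvf w b side i x| ≤ Gf w b side i x := by
  have h1 := sigmoid_pos (Zf w b i x)
  have h2 := sigmoid_lt_one (Zf w b i x)
  have h3 : |Dvf w b side i x| = sig' (Zf w b i x) := by
    unfold Dvf
    rw [abs_mul, abs_epsf, one_mul, abs_of_nonneg (sig'_nonneg _)]
  rw [h3]
  unfold sig' Gf; split <;> nlinarith

lemma abs_Evf_le (i : ι) (x : EuclideanSpace ℝ (Fin dx)) :
    |Evf w b side i x| ≤ Gf w b side i x := by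
  have h1 := sigmoid_pos (Zf w b i x)
  have h2 := sigmoid_lt_one (Zf w b i x)
  have h4 : |1 - 2 * sigmoid (Zf w b i x)| ≤ 1 := by
    rw [abs_le]; constructor <;> linarith
  have h3 : |Evf w b side i x| ≤ sig' (Zf w b i x) := by
    unfold Evf
    rw [abs_mul, abs_epsf, one_mul, abs_mul, abs_of_nonneg (sig'_nonneg _)]
    calc sig' (Zf w b i x) * |1 - 2 * sigmoid (Zf w b i x)|
        ≤ sig' (Zf w b i x) * 1 := by
          exact mul_le_mul_of_nonneg_left h4 (sig'_nonneg _)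
      _ = sig' (Zf w b i x) := mul_one _
  refine h3.trans ?_
  unfold sig' Gf; split <;> nlinarith

end Bounds


lemma norm_smul_clm {E F : Type*} [NormedAddCommGroup E] [NormedSpace ℝ E]
    [NormedAddCommGroup F] [NormedSpace ℝ F] (c : ℝ) (f : E →L[ℝ] F) :
    ‖c • f‖ = |c| * ‖f‖ := by
  rw [← Real.norm_eq_abs]; exact norm_smul c f

set_option maxHeartbeats 1000000 in
/-- If the root-to-leaf path of leaf `l` contains at most `D - 1` internal nodes
(`|Λ(l)| ≤ D − 1`) and `‖w_i‖ ≤ W` for every `i ∈ Λ(l)`, then the spectral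
(operator) norm of the Hessian of the route probability satisfies
`‖∇²p_l(x)‖₂ ≤ p_l(x) · [ (D−1)² W² + (1/4)(D−1) W² ]` for every `x`.
The Hessian is realized as the second Fréchet derivative of `p_l`, a continuous
bilinear map whose operator norm equals the spectral norm of the Hessian matrix. -/
theorem pathProb_hessian_norm_le {dx : ℕ} {ι : Type*} [Fintype ι]
    (D : ℕ) (hD : 1 ≤ D)
    (w : ι → EuclideanSpace ℝ (Fin dx)) (b : ι → ℝ) (side : ι → Bool)
    (W : ℝ) (hW0 : 0 ≤ W)
    (hcard : Fintype.card ι ≤ D - 1)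
    (hW : ∀ i, ‖w i‖ ≤ W)
    (x : EuclideanSpace ℝ (Fin dx)) :
    ‖fderiv ℝ (fun y => fderiv ℝ (pathProb w b side) y) x‖ ≤
      pathProb w b side x *
        (((D : ℝ) - 1) ^ 2 * W ^ 2 + (1 / 4) * ((D : ℝ) - 1) * W ^ 2) := by
  classical
  obtain ⟨N, hNdef⟩ : ∃ N : ℕ, N = Fintype.card ι := ⟨_, rfl⟩
  rw [← hNdef] at hcard
  obtain ⟨p, hpdef⟩ : ∃ p : ℝ, p = pathProb w b side x := ⟨_, rfl⟩
  rw [← hpdef]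
  have hpp : p = ∏ j, Gf w b side j x := hpdef.trans rfl
  have hp0 : 0 < p := by
    rw [hpp]
    exact Finset.prod_pos fun i _ => Gf_pos w b side i x
  have haf : ∀ i, ‖af w i‖ ≤ W := by
    intro i
    rw [show af w i = innerSL ℝ (w i) from rfl, innerSL_apply_norm]
    exact hW i
  have hprod_nonneg : ∀ (s : Finset ι), 0 ≤ ∏ j ∈ s, Gf w b side j x :=
    fun s => Finset.prod_nonneg fun j _ => (Gf_pos w b side j x).le
  have hProdErase : ∀ i, (∏ j ∈ Finset.univ.erase i, Gf w b side j x) * Gf w b side i x = p := by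
    intro i
    rw [hpp, mul_comm]
    exact Finset.mul_prod_erase Finset.univ (fun j => Gf w b side j x) (Finset.mem_univ i)
  -- bound on Pd
  have hPd : ∀ i, ‖Pd w b side x i‖ ≤
      ((Finset.univ.erase i).card : ℝ) * ((∏ j ∈ Finset.univ.erase i, Gf w b side j x) * W) := by
    intro i
    have hterm : ∀ k ∈ Finset.univ.erase i,
        ‖((∏ j ∈ (Finset.univ.erase i).erase k, Gf w b side j x) * Dvf w b side k x) • af w k‖
          ≤ (∏ j ∈ Finset.univ.erase i, Gf w b side j x) * W := by
      intro k hk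
      have hnn := hprod_nonneg ((Finset.univ.erase i).erase k)
      calc ‖((∏ j ∈ (Finset.univ.erase i).erase k, Gf w b side j x) * Dvf w b side k x) • af w k‖
          = |(∏ j ∈ (Finset.univ.erase i).erase k, Gf w b side j x) * Dvf w b side k x|
              * ‖af w k‖ := norm_smul_clm _ _
        _ ≤ ((∏ j ∈ (Finset.univ.erase i).erase k, Gf w b side j x) * Gf w b side k x) * W := by
            apply mul_le_mul _ (haf k) (norm_nonneg _)
              (mul_nonneg hnn (Gf_pos w b side k x).le)
            rw [abs_mul, abs_of_nonneg hnn]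
            exact mul_le_mul_of_nonneg_left (abs_Dvf_le w b side k x) hnn
        _ = (∏ j ∈ Finset.univ.erase i, Gf w b side j x) * W := by
            rw [Finset.prod_erase_mul _ _ hk]
    calc ‖Pd w b side x i‖
        ≤ ∑ k ∈ Finset.univ.erase i,
            ‖((∏ j ∈ (Finset.univ.erase i).erase k, Gf w b side j x) * Dvf w b side k x) • af w k‖ :=
          norm_sum_le _ _
      _ ≤ ∑ _k ∈ Finset.univ.erase i,
            (∏ j ∈ Finset.univ.erase i, Gf w b side j x) * W :=
          Finset.sum_le_sum hterm
      _ = ((Finset.univ.erase i).card : ℝ)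
            * ((∏ j ∈ Finset.univ.erase i, Gf w b side j x) * W) := by
          rw [Finset.sum_const, nsmul_eq_mul]
  -- bound on Cd
  have hCd : ∀ i, ‖Cd w b side x i‖ ≤ (N : ℝ) * (p * W) := by
    intro i
    have hcarderase : ((Finset.univ.erase i).card : ℝ) = (N : ℝ) - 1 := by
      rw [Finset.card_erase_of_mem (Finset.mem_univ i), Finset.card_univ]
      rw [← hNdef]
      have hN1 : 1 ≤ N := by rw [hNdef]; exact Fintype.card_pos_iff.mpr ⟨i⟩
      push_cast [Nat.cast_sub hN1]
      ring
    have hnn := hprod_nonneg (Finset.univ.erase i)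
    have hfirst : ‖(∏ j ∈ Finset.univ.erase i, Gf w b side j x) • (Evf w b side i x • af w i)‖
        ≤ p * W := by
      rw [norm_smul_clm, norm_smul_clm, abs_of_nonneg hnn]
      calc (∏ j ∈ Finset.univ.erase i, Gf w b side j x) * (|Evf w b side i x| * ‖af w i‖)
          ≤ (∏ j ∈ Finset.univ.erase i, Gf w b side j x) * (Gf w b side i x * W) := by
            apply mul_le_mul_of_nonneg_left _ hnn
            exact mul_le_mul (abs_Evf_le w b side i x) (haf i) (norm_nonneg _)
              (Gf_pos w b side i x).le
        _ = p * W := by rw [← hProdErase i]; ring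
    have hsecond : ‖Dvf w b side i x • Pd w b side x i‖ ≤ ((N : ℝ) - 1) * (p * W) := by
      rw [norm_smul_clm]
      calc |Dvf w b side i x| * ‖Pd w b side x i‖
          ≤ Gf w b side i x *
              (((Finset.univ.erase i).card : ℝ)
                * ((∏ j ∈ Finset.univ.erase i, Gf w b side j x) * W)) :=
            mul_le_mul (abs_Dvf_le w b side i x) (hPd i) (norm_nonneg _)
              (Gf_pos w b side i x).le
        _ = ((N : ℝ) - 1) * (p * W) := by
            rw [hcarderase, ← hProdErase i]; ring
    calc ‖Cd w b side x i‖
        ≤ ‖(∏ j ∈ Finset.univ.erase i, Gf w b side j x) • (Evf w b side i x • af w i)‖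
            + ‖Dvf w b side i x • Pd w b side x i‖ := norm_add_le _ _
      _ ≤ p * W + ((N : ℝ) - 1) * (p * W) := add_le_add hfirst hsecond
      _ = (N : ℝ) * (p * W) := by ring
  -- total
  rw [fderiv_fderiv_pathProb]
  have hNpW : 0 ≤ (N : ℝ) * (p * W) :=
    mul_nonneg (Nat.cast_nonneg N) (mul_nonneg hp0.le hW0)
  have htot : ‖∑ i, (Cd w b side x i).smulRight (af w i)‖
      ≤ (N : ℝ) * ((N : ℝ) * (p * W) * W) := by
    calc ‖∑ i, (Cd w b side x i).smulRight (af w i)‖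
        ≤ ∑ i, ‖(Cd w b side x i).smulRight (af w i)‖ :=
            norm_sum_le Finset.univ (fun i => (Cd w b side x i).smulRight (af w i))
      _ ≤ ∑ _i : ι, (N : ℝ) * (p * W) * W := by
          apply Finset.sum_le_sum
          intro i _
          rw [ContinuousLinearMap.norm_smulRight_apply]
          exact mul_le_mul (hCd i) (haf i) (norm_nonneg _) hNpW
      _ = (N : ℝ) * ((N : ℝ) * (p * W) * W) := by
          rw [Finset.sum_const, nsmul_eq_mul, Finset.card_univ, ← hNdef]
  refine htot.trans ?_
  have hcast : (N : ℝ) ≤ (D : ℝ) - 1 := by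
    have h := (Nat.cast_le (α := ℝ)).mpr hcard
    rwa [Nat.cast_sub hD, Nat.cast_one] at h
  have hN0 : (0 : ℝ) ≤ (N : ℝ) := Nat.cast_nonneg N
  have hD0 : (0 : ℝ) ≤ (D : ℝ) - 1 := le_trans hN0 hcast
  have hsq : (N : ℝ) * (N : ℝ) ≤ ((D : ℝ) - 1) * ((D : ℝ) - 1) :=
    mul_le_mul hcast hcast hN0 hD0
  have hq : 0 ≤ p * W ^ 2 := mul_nonneg hp0.le (sq_nonneg W)
  nlinarith [mul_le_mul_of_nonneg_right hsq hq,
    mul_nonneg (mul_nonneg hD0 hp0.le) (sq_nonneg W)]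
end

section
/- Let n ∈ ℕ, let p₁,…,pₙ ≥ 0 with Σ_{i=1}^n p_i = 1, let M ≥ 1, and define the weighted geometric mean g(v) = ∏_{i=1}^n v_i^{p_i} on the cube [1, M]^n ⊆ ℝⁿ. Then for every c ∈ [1,M]^n the Hessian of g satisfies ‖∇²g(c)‖₂ ≤ ‖∇²g(c)‖_F ≤ √2 · M (spectral and Frobenius norms), and consequently for all v₁, v₂ ∈ [1,M]^n one has |g(v₁) − g(v₂) − ⟨∇g(v₂), v₁ − v₂⟩| ≤ (√2·M/2) ‖v₁ − v₂‖². -/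
open scoped BigOperators

/-- The weighted geometric mean `g(v) = ∏ i, v_i ^ p_i` on `ℝⁿ` (Euclidean space). -/
noncomputable def geomMean (n : ℕ) (p : Fin n → ℝ) (v : EuclideanSpace ℝ (Fin n)) : ℝ :=
  ∏ i, v i ^ p i

/-- The `(j,k)` entry of the Hessian matrix of the weighted geometric mean at `c`,
realized as an iterated partial (Fréchet) derivative. -/
noncomputable def geomMeanHess (n : ℕ) (p : Fin n → ℝ) (c : EuclideanSpace ℝ (Fin n))
    (j k : Fin n) : ℝ :=
  fderiv ℝ (fun y => fderiv ℝ (geomMean n p) y (EuclideanSpace.single k 1)) c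
    (EuclideanSpace.single j 1)

namespace GeomMeanAux

variable {n : ℕ} (p : Fin n → ℝ)

/-- First derivative of the geometric mean. -/
noncomputable def gL (c : EuclideanSpace ℝ (Fin n)) : EuclideanSpace ℝ (Fin n) →L[ℝ] ℝ :=
  ∑ i, ((geomMean n p c * p i / c i) • (EuclideanSpace.proj i : EuclideanSpace ℝ (Fin n) →L[ℝ] ℝ))

lemma hasFDerivAt_geomMean {c : EuclideanSpace ℝ (Fin n)} (hc : ∀ i, 0 < c i) :
    HasFDerivAt (geomMean n p) (gL p c) c := by
  have h : ∀ i ∈ Finset.univ, HasFDerivAt (fun v : EuclideanSpace ℝ (Fin n) => (v i) ^ (p i))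
      ((p i * (c i) ^ (p i - 1)) • (EuclideanSpace.proj i : EuclideanSpace ℝ (Fin n) →L[ℝ] ℝ)) c := by
    intro i _
    have h1 : HasDerivAt (fun x : ℝ => x ^ p i) (p i * (c i) ^ (p i - 1)) (c i) :=
      Real.hasDerivAt_rpow_const (Or.inl (hc i).ne')
    have h0 := ContinuousLinearMap.hasFDerivAt (𝕜 := ℝ)
      (f := EuclideanSpace.proj (𝕜 := ℝ) (ι := Fin n) i) (x := c)
    exact h1.comp_hasFDerivAt c h0
  have h2 := HasFDerivAt.finset_prod h
  show HasFDerivAt (fun v : EuclideanSpace ℝ (Fin n) => ∏ i, v i ^ p i) (gL p c) c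
  refine h2.congr_fderiv ?_
  symm
  rw [gL]
  refine Finset.sum_congr rfl fun i _ => ?_
  rw [smul_smul]
  congr 1
  have hprod : geomMean n p c = c i ^ p i * ∏ j ∈ Finset.univ.erase i, c j ^ p j := by
    rw [geomMean, ← Finset.mul_prod_erase _ _ (Finset.mem_univ i)]
  rw [hprod, Real.rpow_sub (hc i), Real.rpow_one]
  field_simp

end GeomMeanAux

namespace GeomMeanAux2
open GeomMeanAux

variable {n : ℕ} (p : Fin n → ℝ)

lemma isOpen_pos : IsOpen {v : EuclideanSpace ℝ (Fin n) | ∀ i, 0 < v i} := by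
  have : {v : EuclideanSpace ℝ (Fin n) | ∀ i, 0 < v i} =
      ⋂ i, {v : EuclideanSpace ℝ (Fin n) | 0 < v i} := by
    ext v; simp [Set.mem_iInter]
  rw [this]
  refine isOpen_iInter_of_finite fun i => ?_
  have hcont : Continuous (fun v : EuclideanSpace ℝ (Fin n) => v i) :=
    (EuclideanSpace.proj (𝕜 := ℝ) (ι := Fin n) i).continuous
  exact isOpen_lt continuous_const hcont

lemma fderiv_eq_gL {c : EuclideanSpace ℝ (Fin n)} (hc : ∀ i, 0 < c i) :
    fderiv ℝ (geomMean n p) c = gL p c := (hasFDerivAt_geomMean p hc).fderiv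

lemma eventually_fderiv_eq {c : EuclideanSpace ℝ (Fin n)} (hc : ∀ i, 0 < c i) :
    (fun v => fderiv ℝ (geomMean n p) v) =ᶠ[nhds c] gL p := by
  filter_upwards [isOpen_pos.mem_nhds (by exact hc)] with v hv
  exact fderiv_eq_gL p hv

/-- The derivative of the `i`-th coefficient `v ↦ g(v)·pᵢ/vᵢ` of `gL`. -/
noncomputable def gD (c : EuclideanSpace ℝ (Fin n)) (i : Fin n) :
    EuclideanSpace ℝ (Fin n) →L[ℝ] ℝ :=
  (geomMean n p c * p i) • (-((c i) ^ 2)⁻¹ • (EuclideanSpace.proj (𝕜 := ℝ) i)) +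
    (c i)⁻¹ • (p i • gL p c)

/-- Second derivative of the geometric mean. -/
noncomputable def gB (c : EuclideanSpace ℝ (Fin n)) :
    EuclideanSpace ℝ (Fin n) →L[ℝ] EuclideanSpace ℝ (Fin n) →L[ℝ] ℝ :=
  ∑ i, (gD p c i).smulRight (EuclideanSpace.proj i)

lemma hasFDerivAt_coef {c : EuclideanSpace ℝ (Fin n)} (hc : ∀ i, 0 < c i) (i : Fin n) :
    HasFDerivAt (fun v => geomMean n p v * p i / v i) (gD p c i) c := by
  have h0 := ContinuousLinearMap.hasFDerivAt (𝕜 := ℝ)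
    (f := EuclideanSpace.proj (𝕜 := ℝ) (ι := Fin n) i) (x := c)
  have hinv : HasFDerivAt (fun v : EuclideanSpace ℝ (Fin n) => (v i)⁻¹)
      (-((c i) ^ 2)⁻¹ • (EuclideanSpace.proj (𝕜 := ℝ) i)) c := by
    have h1 : HasDerivAt (fun x : ℝ => x⁻¹) (-((c i) ^ 2)⁻¹) (c i) := hasDerivAt_inv (hc i).ne'
    exact h1.comp_hasFDerivAt c h0
  have hnum : HasFDerivAt (fun v => geomMean n p v * p i) (p i • gL p c) c :=
    (hasFDerivAt_geomMean p hc).mul_const (p i)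
  have := hnum.mul hinv
  simp only [div_eq_mul_inv]
  exact this

lemma hasFDerivAt_gL {c : EuclideanSpace ℝ (Fin n)} (hc : ∀ i, 0 < c i) :
    HasFDerivAt (gL p) (gB p c) c := by
  have h : ∀ i ∈ Finset.univ, HasFDerivAt
      (fun v : EuclideanSpace ℝ (Fin n) =>
        (geomMean n p v * p i / v i) • (EuclideanSpace.proj (𝕜 := ℝ) (ι := Fin n) i))
      ((gD p c i).smulRight (EuclideanSpace.proj i)) c :=
    fun i _ => (hasFDerivAt_coef p hc i).smul_const (EuclideanSpace.proj i : EuclideanSpace ℝ (Fin n) →L[ℝ] ℝ)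
  have h2 := HasFDerivAt.fun_sum h
  exact h2

end GeomMeanAux2

namespace GeomMeanAux3
open GeomMeanAux GeomMeanAux2

variable {n : ℕ} (p : Fin n → ℝ)

lemma fderiv_fderiv_eq {c : EuclideanSpace ℝ (Fin n)} (hc : ∀ i, 0 < c i) :
    fderiv ℝ (fderiv ℝ (geomMean n p)) c = gB p c :=
  ((hasFDerivAt_gL p hc).congr_of_eventuallyEq (eventually_fderiv_eq p hc)).fderiv

lemma hess_eq_gB {c : EuclideanSpace ℝ (Fin n)} (hc : ∀ i, 0 < c i) (j k : Fin n) :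
    geomMeanHess n p c j k = gB p c (EuclideanSpace.single j 1) (EuclideanSpace.single k 1) := by
  have hev : (fun y => fderiv ℝ (geomMean n p) y (EuclideanSpace.single k 1)) =ᶠ[nhds c]
      (fun y => gL p y (EuclideanSpace.single k 1)) :=
    (eventually_fderiv_eq p hc).mono fun v hv =>
      congrArg (fun L : EuclideanSpace ℝ (Fin n) →L[ℝ] ℝ => L (EuclideanSpace.single k 1)) hv
  have h1 : HasFDerivAt (fun y => gL p y (EuclideanSpace.single k 1))
      ((gB p c).flip (EuclideanSpace.single k 1)) c := by
    have := (hasFDerivAt_gL p hc).clm_apply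
      (hasFDerivAt_const (EuclideanSpace.single (𝕜 := ℝ) k 1) c)
    simpa using this
  have h2 := h1.congr_of_eventuallyEq hev
  rw [geomMeanHess, h2.fderiv]
  rfl

/-- The Hessian matrix entries. -/
noncomputable def Hmat (c : EuclideanSpace ℝ (Fin n)) (j k : Fin n) : ℝ :=
  geomMean n p c * p j * p k / (c j * c k) -
    (if j = k then geomMean n p c * p k / (c k) ^ 2 else 0)

lemma gL_single (c : EuclideanSpace ℝ (Fin n)) (j : Fin n) :
    gL p c (EuclideanSpace.single j 1) = geomMean n p c * p j / c j := by
  simp [gL, ContinuousLinearMap.sum_apply, EuclideanSpace.single_apply]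

lemma gB_single (c : EuclideanSpace ℝ (Fin n)) (j k : Fin n) :
    gB p c (EuclideanSpace.single j 1) (EuclideanSpace.single k 1) = Hmat p c j k := by
  have h : ∀ i : Fin n, (gD p c i) (EuclideanSpace.single j 1) =
      (if i = j then -(geomMean n p c * p i / (c i) ^ 2) else 0) +
        (c i)⁻¹ * (p i * (geomMean n p c * p j / c j)) := by
    intro i
    simp only [gD, ContinuousLinearMap.add_apply, ContinuousLinearMap.smul_apply,
      ContinuousLinearMap.neg_apply, gL_single, PiLp.proj_apply,
      EuclideanSpace.single_apply, smul_eq_mul]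
    split_ifs with hij
    · subst hij; ring
    · ring
  simp only [gB, ContinuousLinearMap.sum_apply, ContinuousLinearMap.smulRight_apply, h,
    ContinuousLinearMap.smul_apply, smul_eq_mul, PiLp.proj_apply,
    EuclideanSpace.single_apply, mul_ite, mul_one, mul_zero,
    Finset.sum_ite_eq', Finset.mem_univ, if_true]
  rw [Hmat]
  rcases eq_or_ne j k with rfl | hjk
  · simp only [if_true]; ring
  · simp only [if_neg (Ne.symm hjk), if_neg hjk]; ring

end GeomMeanAux3

namespace GeomMeanAux4

variable {n : ℕ}

lemma sum_single_eq (u : EuclideanSpace ℝ (Fin n)) :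
    ∑ j, u j • EuclideanSpace.single j (1 : ℝ) = u := by
  ext k
  rw [show (∑ x : Fin n, u x • EuclideanSpace.single x (1:ℝ)) k
      = ∑ x : Fin n, (u x • EuclideanSpace.single x (1:ℝ)) k from
    by rw [WithLp.ofLp_sum, Finset.sum_apply]]
  simp [EuclideanSpace.single_apply]

lemma norm_eq_sqrt (u : EuclideanSpace ℝ (Fin n)) : ‖u‖ = Real.sqrt (∑ i, (u i) ^ 2) := by
  rw [EuclideanSpace.norm_eq]
  congr 1
  exact Finset.sum_congr rfl fun i _ => by rw [Real.norm_eq_abs, sq_abs]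

lemma bilin_apply_eq (B : EuclideanSpace ℝ (Fin n) →L[ℝ] EuclideanSpace ℝ (Fin n) →L[ℝ] ℝ)
    (u w : EuclideanSpace ℝ (Fin n)) :
    B u w = ∑ j, ∑ k, u j * w k *
      B (EuclideanSpace.single j 1) (EuclideanSpace.single k 1) := by
  have hrow : ∀ j : Fin n, B (EuclideanSpace.single j 1) w =
      ∑ k, w k * B (EuclideanSpace.single j 1) (EuclideanSpace.single k 1) := by
    intro j
    conv_lhs => rw [← sum_single_eq w]
    rw [map_sum]
    exact Finset.sum_congr rfl fun k _ => by rw [map_smul, smul_eq_mul]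
  have hu : B u w = ∑ j, u j * B (EuclideanSpace.single j 1) w := by
    conv_lhs => rw [← sum_single_eq u]
    rw [map_sum, ContinuousLinearMap.sum_apply]
    exact Finset.sum_congr rfl fun j _ => by
      rw [map_smul, ContinuousLinearMap.smul_apply, smul_eq_mul]
  rw [hu]
  refine Finset.sum_congr rfl fun j _ => ?_
  rw [hrow, Finset.mul_sum]
  exact Finset.sum_congr rfl fun k _ => by ring

lemma bilin_opNorm_le_frobenius
    (B : EuclideanSpace ℝ (Fin n) →L[ℝ] EuclideanSpace ℝ (Fin n) →L[ℝ] ℝ) :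
    ‖B‖ ≤ Real.sqrt (∑ j, ∑ k,
      (B (EuclideanSpace.single j 1) (EuclideanSpace.single k 1)) ^ 2) := by
  set H : Fin n → Fin n → ℝ :=
    fun j k => B (EuclideanSpace.single j 1) (EuclideanSpace.single k 1) with hH
  set F := Real.sqrt (∑ j, ∑ k, H j k ^ 2) with hF
  have hF0 : 0 ≤ F := Real.sqrt_nonneg _
  refine ContinuousLinearMap.opNorm_le_bound _ hF0 fun u => ?_
  refine ContinuousLinearMap.opNorm_le_bound _ (by positivity) fun w => ?_
  have key : |B u w| ≤ F * ‖u‖ * ‖w‖ := by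
    rw [bilin_apply_eq]
    change |∑ j, ∑ k, u j * w k * H j k| ≤ _
    have h1 : ∀ j, (∑ k, u j * w k * H j k) = u j * (∑ k, w k * H j k) := by
      intro j; rw [Finset.mul_sum]; exact Finset.sum_congr rfl fun k _ => by ring
    simp only [h1]
    have h2 : (∑ j, u j * (∑ k, w k * H j k)) ^ 2 ≤
        (∑ j, u j ^ 2) * (∑ j, (∑ k, w k * H j k) ^ 2) :=
      Finset.sum_mul_sq_le_sq_mul_sq _ _ _
    have h3 : ∀ j, (∑ k, w k * H j k) ^ 2 ≤ (∑ k, w k ^ 2) * (∑ k, H j k ^ 2) :=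
      fun j => Finset.sum_mul_sq_le_sq_mul_sq _ _ _
    have h4 : (∑ j, (∑ k, w k * H j k) ^ 2) ≤ (∑ k, w k ^ 2) * (∑ j, ∑ k, H j k ^ 2) := by
      calc (∑ j, (∑ k, w k * H j k) ^ 2) ≤ ∑ j, (∑ k, w k ^ 2) * (∑ k, H j k ^ 2) :=
            Finset.sum_le_sum fun j _ => h3 j
        _ = (∑ k, w k ^ 2) * (∑ j, ∑ k, H j k ^ 2) := by rw [Finset.mul_sum]
    have h5 : (∑ j, u j * (∑ k, w k * H j k)) ^ 2 ≤
        (∑ j, u j ^ 2) * ((∑ k, w k ^ 2) * (∑ j, ∑ k, H j k ^ 2)) := by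
      refine h2.trans ?_
      exact mul_le_mul_of_nonneg_left h4 (Finset.sum_nonneg fun j _ => sq_nonneg _)
    have habs : |∑ j, u j * (∑ k, w k * H j k)| =
        Real.sqrt ((∑ j, u j * (∑ k, w k * H j k)) ^ 2) := (Real.sqrt_sq_eq_abs _).symm
    rw [habs]
    have h6 := Real.sqrt_le_sqrt h5
    refine h6.trans ?_
    rw [norm_eq_sqrt u, norm_eq_sqrt w, hF]
    rw [Real.sqrt_mul (Finset.sum_nonneg fun j _ => sq_nonneg _),
      Real.sqrt_mul (Finset.sum_nonneg fun j _ => sq_nonneg _)]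
    ring_nf
    exact le_of_eq (by ring)
  calc ‖B u w‖ = |B u w| := rfl
    _ ≤ F * ‖u‖ * ‖w‖ := key

end GeomMeanAux4

namespace GeomMeanAux5
open GeomMeanAux GeomMeanAux2 GeomMeanAux3

variable {n : ℕ} {p : Fin n → ℝ} {M : ℝ}

lemma geomMean_nonneg {c : EuclideanSpace ℝ (Fin n)} (hc : ∀ i, 0 ≤ c i) :
    0 ≤ geomMean n p c :=
  Finset.prod_nonneg fun i _ => Real.rpow_nonneg (hc i) _

lemma geomMean_le_M (hp : ∀ i, 0 ≤ p i) (hsum : ∑ i, p i = 1) (hM : 1 ≤ M)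
    {c : EuclideanSpace ℝ (Fin n)} (hc : ∀ i, c i ∈ Set.Icc (1 : ℝ) M) :
    geomMean n p c ≤ M := by
  have h1 : geomMean n p c ≤ ∏ i, M ^ p i := by
    refine Finset.prod_le_prod (fun i _ => Real.rpow_nonneg ?_ _) fun i _ => ?_
    · exact le_trans zero_le_one (hc i).1
    · exact Real.rpow_le_rpow (le_trans zero_le_one (hc i).1) (hc i).2 (hp i)
  refine h1.trans ?_
  rw [← Real.rpow_sum_of_pos (by linarith : (0:ℝ) < M), hsum, Real.rpow_one]

lemma p_le_one (hp : ∀ i, 0 ≤ p i) (hsum : ∑ i, p i = 1) (i : Fin n) : p i ≤ 1 := by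
  rw [← hsum]
  exact Finset.single_le_sum (fun j _ => hp j) (Finset.mem_univ i)

lemma sum_sq_le_one (hp : ∀ i, 0 ≤ p i) (hsum : ∑ i, p i = 1) : ∑ i, p i ^ 2 ≤ 1 := by
  calc ∑ i, p i ^ 2 ≤ ∑ i, p i := Finset.sum_le_sum fun i _ => by
        nlinarith [hp i, p_le_one hp hsum i]
    _ = 1 := hsum

lemma Hmat_sq_le (hp : ∀ i, 0 ≤ p i) (hsum : ∑ i, p i = 1) (hM : 1 ≤ M)
    {c : EuclideanSpace ℝ (Fin n)} (hc : ∀ i, c i ∈ Set.Icc (1 : ℝ) M) (j k : Fin n) :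
    Hmat p c j k ^ 2 ≤ M ^ 2 * (p j ^ 2 * p k ^ 2) +
      (if j = k then M ^ 2 * p j ^ 2 else 0) := by
  have hc0 : ∀ i, (0:ℝ) < c i := fun i => lt_of_lt_of_le zero_lt_one (hc i).1
  have hc1 : ∀ i, (1:ℝ) ≤ c i := fun i => (hc i).1
  have hG0 : 0 ≤ geomMean n p c := geomMean_nonneg fun i => (hc0 i).le
  have hGM : geomMean n p c ≤ M := geomMean_le_M hp hsum hM hc
  set G := geomMean n p c
  have hG2 : G ^ 2 ≤ M ^ 2 := by nlinarith
  rcases eq_or_ne j k with rfl | hjk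
  · have hite : (if j = j then M ^ 2 * p j ^ 2 else 0) = M ^ 2 * p j ^ 2 := if_pos rfl
    rw [hite]
    have hx : c j ^ 2 ≠ 0 := pow_ne_zero _ (hc0 j).ne'
    have hEq : Hmat p c j j = G * p j * (p j - 1) / (c j) ^ 2 := by
      rw [Hmat, if_pos rfl, show c j * c j = c j ^ 2 from (sq (c j)).symm, div_sub_div_same]
      congr 1
      ring
    rw [hEq, div_pow]
    have hnum : (G * p j * (p j - 1)) ^ 2 ≤ M ^ 2 * p j ^ 2 := by
      have hq : (p j - 1) ^ 2 ≤ 1 := by nlinarith [hp j, p_le_one hp hsum j]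
      have h1 : G ^ 2 * ((p j - 1) ^ 2 * p j ^ 2) ≤ M ^ 2 * (1 * p j ^ 2) := by
        refine mul_le_mul hG2 ?_ (by positivity) (by positivity)
        exact mul_le_mul_of_nonneg_right hq (sq_nonneg _)
      nlinarith [h1]
    have hden1 : (1:ℝ) ≤ (c j) ^ 2 := by nlinarith [hc1 j]
    have hden : (1:ℝ) ≤ ((c j) ^ 2) ^ 2 := by nlinarith [hden1]
    have := div_le_self (sq_nonneg (G * p j * (p j - 1))) hden
    nlinarith [sq_nonneg (M * (p j * p j))]
  · rw [Hmat, if_neg hjk, sub_zero, div_pow]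
    simp only [if_neg hjk, add_zero]
    have hnum : (G * p j * p k) ^ 2 ≤ M ^ 2 * (p j ^ 2 * p k ^ 2) := by
      have h1 := mul_le_mul_of_nonneg_right hG2
        (mul_nonneg (sq_nonneg (p j)) (sq_nonneg (p k)))
      nlinarith [h1]
    have hcc : (1:ℝ) ≤ c j * c k := by nlinarith [hc1 j, hc1 k]
    have hden : (1:ℝ) ≤ (c j * c k) ^ 2 := by nlinarith [hcc]
    have := div_le_self (sq_nonneg (G * p j * p k)) hden
    nlinarith

lemma frobenius_le (hp : ∀ i, 0 ≤ p i) (hsum : ∑ i, p i = 1) (hM : 1 ≤ M)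
    {c : EuclideanSpace ℝ (Fin n)} (hc : ∀ i, c i ∈ Set.Icc (1 : ℝ) M) :
    ∑ j, ∑ k, Hmat p c j k ^ 2 ≤ 2 * M ^ 2 := by
  have h1 : ∑ j, ∑ k, Hmat p c j k ^ 2 ≤
      ∑ j, ∑ k, (M ^ 2 * (p j ^ 2 * p k ^ 2) + (if j = k then M ^ 2 * p j ^ 2 else 0)) :=
    Finset.sum_le_sum fun j _ => Finset.sum_le_sum fun k _ => Hmat_sq_le hp hsum hM hc j k
  refine h1.trans ?_
  have h2 : ∀ j : Fin n, ∑ k, (M ^ 2 * (p j ^ 2 * p k ^ 2) + (if j = k then M ^ 2 * p j ^ 2 else 0))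
      = M ^ 2 * p j ^ 2 * (∑ k, p k ^ 2) + M ^ 2 * p j ^ 2 := by
    intro j
    rw [Finset.sum_add_distrib, Finset.sum_ite_eq (Finset.univ) j (fun _ => M ^ 2 * p j ^ 2)]
    simp [Finset.mul_sum]
    ring_nf
  simp only [h2]
  rw [Finset.sum_add_distrib, ← Finset.sum_mul]
  have hs := sum_sq_le_one hp hsum
  have hs0 : 0 ≤ ∑ i, p i ^ 2 := Finset.sum_nonneg fun i _ => sq_nonneg _
  rw [← Finset.mul_sum]
  have hss : (∑ i, p i ^ 2) * (∑ i, p i ^ 2) ≤ 1 := by nlinarith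
  have k1 := mul_le_mul_of_nonneg_left hss (sq_nonneg M)
  have k2 := mul_le_mul_of_nonneg_left hs (sq_nonneg M)
  nlinarith [k1, k2]

end GeomMeanAux5


open GeomMeanAux GeomMeanAux2 GeomMeanAux3 GeomMeanAux4 GeomMeanAux5

/-- Let `p₁,…,pₙ ≥ 0` sum to one and `M ≥ 1`.  On the cube `[1,M]ⁿ` the Hessian of the
weighted geometric mean `g` satisfies `‖∇²g(c)‖₂ ≤ ‖∇²g(c)‖_F ≤ √2·M` (the spectral
norm is realized as the operator norm of the second Fréchet derivative and the
Frobenius norm as the square root of the sum of squared entries), and consequently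
`|g(v₁) − g(v₂) − ⟨∇g(v₂), v₁ − v₂⟩| ≤ (√2·M/2)·‖v₁ − v₂‖²` on the cube. -/
theorem geomMean_hessian_bound (n : ℕ) (p : Fin n → ℝ)
    (hp : ∀ i, 0 ≤ p i) (hsum : ∑ i, p i = 1) (M : ℝ) (hM : 1 ≤ M) :
    (∀ c : EuclideanSpace ℝ (Fin n), (∀ i, c i ∈ Set.Icc (1 : ℝ) M) →
      ‖fderiv ℝ (fderiv ℝ (geomMean n p)) c‖ ≤
          Real.sqrt (∑ j, ∑ k, geomMeanHess n p c j k ^ 2) ∧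
        Real.sqrt (∑ j, ∑ k, geomMeanHess n p c j k ^ 2) ≤ Real.sqrt 2 * M) ∧
    (∀ v₁ v₂ : EuclideanSpace ℝ (Fin n),
      (∀ i, v₁ i ∈ Set.Icc (1 : ℝ) M) → (∀ i, v₂ i ∈ Set.Icc (1 : ℝ) M) →
        |geomMean n p v₁ - geomMean n p v₂ -
            (inner ℝ (gradient (geomMean n p) v₂) (v₁ - v₂) : ℝ)| ≤
          Real.sqrt 2 * M / 2 * ‖v₁ - v₂‖ ^ 2) := by
  have hM0 : (0:ℝ) ≤ M := by linarith
  have sqrt2M : Real.sqrt (2 * M ^ 2) = Real.sqrt 2 * M := by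
    rw [Real.sqrt_mul (by norm_num : (0:ℝ) ≤ 2), Real.sqrt_sq hM0]
  -- entries of the second derivative as a matrix
  have hessEq : ∀ (c : EuclideanSpace ℝ (Fin n)), (∀ i, c i ∈ Set.Icc (1 : ℝ) M) →
      ∀ j k, geomMeanHess n p c j k = Hmat p c j k := by
    intro c hc j k
    have hpos : ∀ i, 0 < c i := fun i => lt_of_lt_of_le zero_lt_one (hc i).1
    rw [hess_eq_gB p hpos, gB_single]
  have hsumEq : ∀ (c : EuclideanSpace ℝ (Fin n)), (∀ i, c i ∈ Set.Icc (1 : ℝ) M) →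
      (∑ j, ∑ k, geomMeanHess n p c j k ^ 2)
        = ∑ j, ∑ k, (gB p c (EuclideanSpace.single j 1) (EuclideanSpace.single k 1)) ^ 2 := by
    intro c hc
    refine Finset.sum_congr rfl fun j _ => Finset.sum_congr rfl fun k _ => ?_
    have hpos : ∀ i, 0 < c i := fun i => lt_of_lt_of_le zero_lt_one (hc i).1
    rw [hess_eq_gB p hpos]
  have hsumEq' : ∀ (c : EuclideanSpace ℝ (Fin n)), (∀ i, c i ∈ Set.Icc (1 : ℝ) M) →
      (∑ j, ∑ k, geomMeanHess n p c j k ^ 2) = ∑ j, ∑ k, Hmat p c j k ^ 2 := by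
    intro c hc
    exact Finset.sum_congr rfl fun j _ => Finset.sum_congr rfl fun k _ => by
      rw [hessEq c hc]
  have part1 : ∀ c : EuclideanSpace ℝ (Fin n), (∀ i, c i ∈ Set.Icc (1 : ℝ) M) →
      ‖fderiv ℝ (fderiv ℝ (geomMean n p)) c‖ ≤
          Real.sqrt (∑ j, ∑ k, geomMeanHess n p c j k ^ 2) ∧
        Real.sqrt (∑ j, ∑ k, geomMeanHess n p c j k ^ 2) ≤ Real.sqrt 2 * M := by
    intro c hc
    have hpos : ∀ i, 0 < c i := fun i => lt_of_lt_of_le zero_lt_one (hc i).1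
    constructor
    · rw [fderiv_fderiv_eq p hpos, hsumEq c hc]
      exact bilin_opNorm_le_frobenius _
    · rw [hsumEq' c hc]
      refine (Real.sqrt_le_sqrt (frobenius_le hp hsum hM hc)).trans ?_
      rw [sqrt2M]
  refine ⟨part1, ?_⟩
  -- operator norm of gB is bounded on the cube
  have hgB : ∀ c : EuclideanSpace ℝ (Fin n), (∀ i, c i ∈ Set.Icc (1 : ℝ) M) →
      ‖gB p c‖ ≤ Real.sqrt 2 * M := by
    intro c hc
    refine (bilin_opNorm_le_frobenius (gB p c)).trans ?_
    rw [← hsumEq c hc, hsumEq' c hc]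
    refine (Real.sqrt_le_sqrt (frobenius_le hp hsum hM hc)).trans (le_of_eq sqrt2M)
  intro v₁ v₂ h₁ h₂
  set d : EuclideanSpace ℝ (Fin n) := v₁ - v₂ with hd
  set γ : ℝ → EuclideanSpace ℝ (Fin n) := fun t => v₂ + t • d with hγdef
  have hγmem : ∀ t ∈ Set.Icc (0:ℝ) 1, ∀ i, γ t i ∈ Set.Icc (1:ℝ) M := by
    intro t ht i
    have h1 := h₁ i; have h2 := h₂ i
    have hcoord : γ t i = v₂ i + t * (v₁ i - v₂ i) := by
      simp [hγdef, hd]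
    rw [hcoord]
    rcases ht with ⟨ht0, ht1⟩
    rcases h1 with ⟨h1a, h1b⟩; rcases h2 with ⟨h2a, h2b⟩
    constructor <;> nlinarith
  have hγpos : ∀ t ∈ Set.Icc (0:ℝ) 1, ∀ i, 0 < γ t i :=
    fun t ht i => lt_of_lt_of_le zero_lt_one (hγmem t ht i).1
  have hγ : ∀ t : ℝ, HasDerivAt γ d t := by
    intro t
    have := ((hasDerivAt_id t).smul_const d).const_add v₂
    exact this.congr_deriv (by simp)
  set φ : ℝ → ℝ := fun t => geomMean n p (γ t) with hφdef
  set φ' : ℝ → ℝ := fun t => gL p (γ t) d with hφ'def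
  have hφ : ∀ t ∈ Set.Icc (0:ℝ) 1, HasDerivAt φ (φ' t) t := fun t ht =>
    (hasFDerivAt_geomMean p (hγpos t ht)).comp_hasDerivAt t (hγ t)
  have hφ' : ∀ t ∈ Set.Icc (0:ℝ) 1, HasDerivAt φ' (gB p (γ t) d d) t := by
    intro t ht
    have h1 : HasFDerivAt (fun v => gL p v d) ((gB p (γ t)).flip d) (γ t) := by
      have := (hasFDerivAt_gL p (hγpos t ht)).clm_apply (hasFDerivAt_const d (γ t))
      simpa using this
    have := h1.comp_hasDerivAt t (hγ t)
    exact this.congr_deriv (by simp)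
  set K : ℝ := Real.sqrt 2 * M * ‖d‖ ^ 2 with hK
  have hK0 : 0 ≤ K :=
    mul_nonneg (mul_nonneg (Real.sqrt_nonneg 2) hM0) (sq_nonneg _)
  have hB2 : ∀ t ∈ Set.Icc (0:ℝ) 1, ‖gB p (γ t) d d‖ ≤ K := by
    intro t ht
    calc ‖gB p (γ t) d d‖ ≤ ‖gB p (γ t) d‖ * ‖d‖ := ContinuousLinearMap.le_opNorm _ _
      _ ≤ (‖gB p (γ t)‖ * ‖d‖) * ‖d‖ :=
          mul_le_mul_of_nonneg_right
            (ContinuousLinearMap.le_opNorm _ _) (norm_nonneg _)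
      _ ≤ ((Real.sqrt 2 * M) * ‖d‖) * ‖d‖ := by
          have := hgB (γ t) (hγmem t ht)
          gcongr
      _ = K := by rw [hK]; ring
  have hlip : ∀ t ∈ Set.Icc (0:ℝ) 1, ‖φ' t - φ' 0‖ ≤ K * t := by
    intro t ht
    have := Convex.norm_image_sub_le_of_norm_hasDerivWithin_le
      (f := φ') (f' := fun t => gB p (γ t) d d) (s := Set.Icc (0:ℝ) 1)
      (fun x hx => (hφ' x hx).hasDerivWithinAt) (fun x hx => hB2 x hx)
      (convex_Icc 0 1) (Set.left_mem_Icc.2 zero_le_one) ht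
    have ht0 : |t| = t := abs_of_nonneg ht.1
    simpa [Real.norm_eq_abs, ht0] using this
  set ψ : ℝ → ℝ := fun t => φ t - φ 0 - t * φ' 0 with hψdef
  have hψder : ∀ t ∈ Set.Icc (0:ℝ) 1, HasDerivAt ψ (φ' t - φ' 0) t := by
    intro t ht
    have h1 := ((hφ t ht).sub_const (φ 0)).sub ((hasDerivAt_id t).mul_const (φ' 0))
    exact h1.congr_deriv (by simp)
  have hψcont : ContinuousOn ψ (Set.Icc (0:ℝ) 1) :=
    fun t ht => ((hψder t ht).continuousAt).continuousWithinAt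
  have key := image_norm_le_of_norm_deriv_right_le_deriv_boundary
    (f := ψ) (f' := fun t => φ' t - φ' 0) (a := 0) (b := 1)
    hψcont
    (fun x hx => (hψder x (Set.Ico_subset_Icc_self hx)).hasDerivWithinAt)
    (B := fun t => K * t ^ 2 / 2) (B' := fun t => K * t)
    (by simp [hψdef])
    (fun x => by
      have h := ((hasDerivAt_pow 2 x).const_mul K).div_const 2
      refine h.congr_deriv ?_
      symm
      simp; ring)
    (fun x hx => by
      have := hlip x (Set.Ico_subset_Icc_self hx)
      simpa using this)
  have hfinal := key (Set.right_mem_Icc.2 zero_le_one)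
  have hγ1 : γ 1 = v₁ := by
    rw [hγdef]; simp [hd]
  have hγ0 : γ 0 = v₂ := by
    rw [hγdef]; simp
  have hinner : (inner ℝ (gradient (geomMean n p) v₂) d : ℝ) = φ' 0 := by
    have hpos2 : ∀ i, 0 < v₂ i := fun i => lt_of_lt_of_le zero_lt_one (h₂ i).1
    have : (inner ℝ (gradient (geomMean n p) v₂) d : ℝ) = fderiv ℝ (geomMean n p) v₂ d := by
      rw [gradient]
      exact InnerProductSpace.toDual_symm_apply
    have h0 : φ' 0 = gL p v₂ d := by
      simp only [hφ'def]
      rw [hγ0]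
    rw [this, fderiv_eq_gL p hpos2, h0]
  have hψ1 : ψ 1 = geomMean n p v₁ - geomMean n p v₂ -
      (inner ℝ (gradient (geomMean n p) v₂) d : ℝ) := by
    rw [hψdef]
    simp only [one_mul, hφdef, hγ1, hγ0]
    rw [hinner]
  rw [← hψ1]
  calc |ψ 1| = ‖ψ 1‖ := rfl
    _ ≤ K * 1 ^ 2 / 2 := hfinal
    _ = Real.sqrt 2 * M / 2 * ‖d‖ ^ 2 := by rw [hK]; ring
end

section
/- Let (X, 𝒜_X, ν_X) and (Y, 𝒜_Y, ν_Y) be finite measure spaces with ν_X ≠ 0 and ν_Y ≠ 0, let n ∈ ℕ, let q₁,…,qₙ ≥ 0 with Σ_{i=1}^n q_i = 1, and let h₁,…,hₙ : X × Y → ℝ be bounded jointly measurable functions. Then lim_{ε → 0⁺} ε · log ∫_X ∏_{i=1}^n ( ∫_Y exp(h_i(x, y)/ε) dν_Y(y) )^{q_i} dν_X(x) = ess sup_{ν_X, x} Σ_{i=1}^n q_i · ess sup_{ν_Y, y} h_i(x, y), where for each i the inner map x ↦ ess sup_{ν_Y, y} h_i(x, y) is measurable and the outer essential supremum is taken with respect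 to ν_X. -/
open MeasureTheory Filter
open scoped BigOperators

open scoped ENNReal

namespace NestedLaplaceAux
open Set



variable {α : Type*} [MeasurableSpace α] {μ : Measure α} {g : α → ℝ} {C : ℝ}

lemma isBddUnder (hbdd : ∀ y, |g y| ≤ C) : IsBoundedUnder (· ≤ ·) (ae μ) g :=
  isBoundedUnder_of ⟨C, fun y => (abs_le.1 (hbdd y)).2⟩

lemma essSup_le_of_null (hμ : μ ≠ 0) (hbdd : ∀ y, |g y| ≤ C) {c : ℝ}
    (hc : μ {y | c < g y} = 0) : essSup g μ ≤ c := by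
  rw [essSup_eq_sInf]
  refine csInf_le ⟨-C, ?_⟩ hc
  rintro a ha
  by_contra hlt
  push_neg at hlt
  have huniv : {y | a < g y} = Set.univ := by
    ext y
    simp only [mem_setOf_eq, mem_univ, iff_true]
    have := (abs_le.1 (hbdd y)).1
    linarith
  rw [Set.mem_setOf_eq, huniv] at ha
  exact hμ (Measure.measure_univ_eq_zero.1 ha)

lemma essSup_le_bound (hμ : μ ≠ 0) (hbdd : ∀ y, |g y| ≤ C) : essSup g μ ≤ C := by
  refine essSup_le_of_null hμ hbdd ?_
  have : {y | C < g y} = (∅ : Set α) := by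
    ext y
    simp only [mem_setOf_eq, mem_empty_iff_false, iff_false, not_lt]
    exact (abs_le.1 (hbdd y)).2
  simp [this]

lemma neg_le_essSup (hμ : μ ≠ 0) (hbdd : ∀ y, |g y| ≤ C) : -C ≤ essSup g μ := by
  rw [essSup_eq_sInf]
  refine le_csInf ?_ ?_
  · refine ⟨C, ?_⟩
    have : {y | C < g y} = (∅ : Set α) := by
      ext y
      simp only [mem_setOf_eq, mem_empty_iff_false, iff_false, not_lt]
      exact (abs_le.1 (hbdd y)).2
    simp [Set.mem_setOf_eq, this]
  · intro a ha
    by_contra hlt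
    push_neg at hlt
    have huniv : {y | a < g y} = Set.univ := by
      ext y
      simp only [mem_setOf_eq, mem_univ, iff_true]
      have := (abs_le.1 (hbdd y)).1
      linarith
    rw [Set.mem_setOf_eq, huniv] at ha
    exact hμ (Measure.measure_univ_eq_zero.1 ha)

lemma ae_le_essSup' (hbdd : ∀ y, |g y| ≤ C) : ∀ᵐ y ∂μ, g y ≤ essSup g μ :=
  ae_le_essSup (isBddUnder hbdd)

lemma null_of_essSup_le (hbdd : ∀ y, |g y| ≤ C) {t : ℝ} (ht : essSup g μ ≤ t) :
    μ {y | t < g y} = 0 := by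
  have hae := ae_le_essSup' (μ := μ) hbdd
  rw [ae_iff] at hae
  refine measure_mono_null ?_ hae
  intro y hy
  simp only [mem_setOf_eq, not_le] at *
  linarith

lemma exceed_pos (hμ : μ ≠ 0) (hbdd : ∀ y, |g y| ≤ C) {δ : ℝ} (hδ : 0 < δ) :
    μ {y | essSup g μ - δ < g y} ≠ 0 := by
  intro h0
  have := essSup_le_of_null hμ hbdd h0
  linarith

lemma measurable_essSup_fiber {X Y : Type*} [MeasurableSpace X] [MeasurableSpace Y]
    (νY : Measure Y) [IsFiniteMeasure νY] (hY : νY ≠ 0) (h : X → Y → ℝ)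
    (hm : Measurable fun z : X × Y => h z.1 z.2)
    (C : ℝ) (hbdd : ∀ x y, |h x y| ≤ C) :
    Measurable fun x => essSup (fun y => h x y) νY := by
  apply measurable_of_Iic
  intro t
  have hE : MeasurableSet {z : X × Y | t < h z.1 z.2} := measurableSet_lt measurable_const hm
  have key : (fun x => essSup (fun y => h x y) νY) ⁻¹' Iic t
      = (fun x => νY (Prod.mk x ⁻¹' {z : X × Y | t < h z.1 z.2})) ⁻¹' {0} := by
    ext x
    simp only [mem_preimage, mem_Iic, mem_singleton_iff]
    constructor
    · intro hle
      exact null_of_essSup_le (hbdd x) hle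
    · intro h0
      exact essSup_le_of_null hY (hbdd x) h0
  rw [key]
  exact measurable_measure_prodMk_left hE (measurableSet_singleton 0)

lemma integrable_of_bdd {μ : Measure α} [IsFiniteMeasure μ]
    {f : α → ℝ} (hf : AEStronglyMeasurable f μ) {D : ℝ} (hD : ∀ x, |f x| ≤ D) :
    Integrable f μ :=
  (integrable_const D).mono' hf (Filter.Eventually.of_forall fun x => by
    simpa [Real.norm_eq_abs] using hD x)

lemma prod_rpow_mul_exp {n : ℕ} (q : Fin n → ℝ) (K : ℝ) (hK : 0 < K) (a : Fin n → ℝ) :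
    ∏ i, (K * Real.exp (a i)) ^ q i = K ^ (∑ i, q i) * Real.exp (∑ i, q i * a i) := by
  have h1 : ∀ i ∈ Finset.univ, (K * Real.exp (a i)) ^ q i
      = K ^ q i * Real.exp (q i * a i) := by
    intro i _
    rw [Real.mul_rpow hK.le (Real.exp_pos _).le, ← Real.exp_mul, mul_comm (a i)]
  rw [Finset.prod_congr rfl h1, Finset.prod_mul_distrib, ← Real.exp_sum,
    ← Real.rpow_sum_of_pos hK]

end NestedLaplaceAux

open NestedLaplaceAux

/-- Two-level Laplace principle: for finite nonzero measures `ν_X, ν_Y`, nonnegative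
weights `q_i` summing to one, and bounded jointly measurable functions `h_i`,
`ε · log ∫_X ∏ i (∫_Y exp(h_i(x,y)/ε) dν_Y)^{q_i} dν_X` converges, as `ε → 0⁺`, to
`ess sup_{ν_X, x} Σ i, q_i · ess sup_{ν_Y, y} h_i(x,y)`; moreover each inner map
`x ↦ ess sup_{ν_Y, y} h_i(x,y)` is measurable. -/
theorem nested_laplace_principle {X Y : Type*} [MeasurableSpace X] [MeasurableSpace Y]
    (νX : Measure X) (νY : Measure Y)
    [IsFiniteMeasure νX] [IsFiniteMeasure νY] (hX : νX ≠ 0) (hY : νY ≠ 0)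
    (n : ℕ) (q : Fin n → ℝ) (hq : ∀ i, 0 ≤ q i) (hqsum : ∑ i, q i = 1)
    (h : Fin n → X → Y → ℝ)
    (hmeas : ∀ i, Measurable (fun z : X × Y => h i z.1 z.2))
    (C : ℝ) (hbdd : ∀ i x y, |h i x y| ≤ C) :
    (∀ i, Measurable (fun x => essSup (fun y => h i x y) νY)) ∧
      Tendsto
        (fun ε : ℝ =>
          ε * Real.log (∫ x, ∏ i, (∫ y, Real.exp (h i x y / ε) ∂νY) ^ q i ∂νX))
        (nhdsWithin 0 (Set.Ioi 0))
        (nhds (essSup (fun x => ∑ i, q i * essSup (fun y => h i x y) νY) νX)) := by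
  classical
  have hSmeas : ∀ i, Measurable (fun x => essSup (fun y => h i x y) νY) :=
    fun i => measurable_essSup_fiber νY hY (h i) (hmeas i) C (hbdd i)
  refine ⟨hSmeas, ?_⟩
  set S : Fin n → X → ℝ := fun i x => essSup (fun y => h i x y) νY with hSdef
  set G : X → ℝ := fun x => ∑ i, q i * S i x with hGdef
  set M : ℝ := essSup G νX with hMdef
  -- basic bounds
  have hSbd : ∀ i x, |S i x| ≤ C := fun i x =>
    abs_le.2 ⟨neg_le_essSup hY (hbdd i x), essSup_le_bound hY (hbdd i x)⟩
  have hGmeas : Measurable G :=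
    Finset.measurable_sum _ fun i _ => ((hSmeas i).const_mul (q i))
  have hGbd : ∀ x, |G x| ≤ C := by
    intro x
    calc |∑ i, q i * S i x| ≤ ∑ i, |q i * S i x| := Finset.abs_sum_le_sum_abs _ _
      _ ≤ ∑ i, q i * C := Finset.sum_le_sum fun i _ => by
          rw [abs_mul, abs_of_nonneg (hq i)]
          exact mul_le_mul_of_nonneg_left (hSbd i x) (hq i)
      _ = C := by rw [← Finset.sum_mul, hqsum, one_mul]
  have hKYpos : (0:ℝ) < (νY Set.univ).toReal :=
    ENNReal.toReal_pos (fun h0 => hY (Measure.measure_univ_eq_zero.1 h0)) (measure_ne_top _ _)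
  have hKXpos : (0:ℝ) < (νX Set.univ).toReal :=
    ENNReal.toReal_pos (fun h0 => hX (Measure.measure_univ_eq_zero.1 h0)) (measure_ne_top _ _)
  set KY : ℝ := (νY Set.univ).toReal
  set KX : ℝ := (νX Set.univ).toReal
  -- inner integrals
  have hInnerMeas : ∀ (ε : ℝ) (i : Fin n),
      Measurable fun x => ∫ y, Real.exp (h i x y / ε) ∂νY := by
    intro ε i
    have hsm : StronglyMeasurable fun z : X × Y => Real.exp (h i z.1 z.2 / ε) :=
      (Real.measurable_exp.comp ((hmeas i).div_const ε)).stronglyMeasurable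
    exact hsm.integral_prod_right'.measurable
  have hInnerNN : ∀ (ε : ℝ) (i : Fin n) (x : X),
      0 ≤ ∫ y, Real.exp (h i x y / ε) ∂νY :=
    fun ε i x => integral_nonneg fun y => (Real.exp_pos _).le
  have hIntY : ∀ {ε : ℝ}, 0 < ε → ∀ (i : Fin n) (x : X),
      Integrable (fun y => Real.exp (h i x y / ε)) νY := by
    intro ε hε i x
    refine integrable_of_bdd
      ((Real.measurable_exp.comp (((hmeas i).comp (measurable_prodMk_left)).div_const ε)).aestronglyMeasurable)
      (D := Real.exp (C / ε)) (fun y => ?_)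
    rw [abs_of_pos (Real.exp_pos _)]
    apply Real.exp_le_exp.2
    gcongr
    exact (abs_le.1 (hbdd i x y)).2
  have hInnerUB : ∀ {ε : ℝ}, 0 < ε → ∀ (i : Fin n) (x : X),
      ∫ y, Real.exp (h i x y / ε) ∂νY ≤ KY * Real.exp (S i x / ε) := by
    intro ε hε i x
    have hae : ∀ᵐ y ∂νY, Real.exp (h i x y / ε) ≤ Real.exp (S i x / ε) := by
      filter_upwards [ae_le_essSup' (μ := νY) (hbdd i x)] with y hy
      exact Real.exp_le_exp.2 (by gcongr)
    calc ∫ y, Real.exp (h i x y / ε) ∂νY ≤ ∫ _, Real.exp (S i x / ε) ∂νY :=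
          integral_mono_ae (hIntY hε i x) (integrable_const _) hae
      _ = KY * Real.exp (S i x / ε) := by rw [integral_const, smul_eq_mul]; rfl
  -- the product function Φ
  have hPhiMeas : ∀ ε : ℝ,
      Measurable fun x => ∏ i, (∫ y, Real.exp (h i x y / ε) ∂νY) ^ q i :=
    fun ε => Finset.measurable_prod _ fun i _ => (hInnerMeas ε i).pow measurable_const
  have hPhiNN : ∀ (ε : ℝ) (x : X),
      0 ≤ ∏ i, (∫ y, Real.exp (h i x y / ε) ∂νY) ^ q i :=
    fun ε x => Finset.prod_nonneg fun i _ => Real.rpow_nonneg (hInnerNN ε i x) _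
  have hPhiUB : ∀ {ε : ℝ}, 0 < ε → ∀ x : X,
      (∏ i, (∫ y, Real.exp (h i x y / ε) ∂νY) ^ q i) ≤ KY * Real.exp (G x / ε) := by
    intro ε hε x
    calc (∏ i, (∫ y, Real.exp (h i x y / ε) ∂νY) ^ q i)
        ≤ ∏ i, (KY * Real.exp (S i x / ε)) ^ q i :=
          Finset.prod_le_prod (fun i _ => Real.rpow_nonneg (hInnerNN ε i x) _)
            (fun i _ => Real.rpow_le_rpow (hInnerNN ε i x) (hInnerUB hε i x) (hq i))
      _ = KY ^ (∑ i, q i) * Real.exp (∑ i, q i * (S i x / ε)) :=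
          prod_rpow_mul_exp q KY hKYpos _
      _ = KY * Real.exp (G x / ε) := by
          rw [hqsum, Real.rpow_one]
          have hsum : ∑ i, q i * (S i x / ε) = G x / ε := by
            simp_rw [← mul_div_assoc]
            rw [← Finset.sum_div]
          rw [hsum]
  have hPhiInt : ∀ {ε : ℝ}, 0 < ε →
      Integrable (fun x => ∏ i, (∫ y, Real.exp (h i x y / ε) ∂νY) ^ q i) νX := by
    intro ε hε
    refine integrable_of_bdd (hPhiMeas ε).aestronglyMeasurable
      (D := KY * Real.exp (C / ε)) (fun x => ?_)
    rw [abs_of_nonneg (hPhiNN ε x)]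
    refine le_trans (hPhiUB hε x) ?_
    have : G x ≤ C := (abs_le.1 (hGbd x)).2
    gcongr
  have hGleM : ∀ᵐ x ∂νX, G x ≤ M := ae_le_essSup' (μ := νX) hGbd
  -- upper bound on the integral
  have hIntUB : ∀ {ε : ℝ}, 0 < ε →
      ∫ x, ∏ i, (∫ y, Real.exp (h i x y / ε) ∂νY) ^ q i ∂νX
        ≤ KX * (KY * Real.exp (M / ε)) := by
    intro ε hε
    calc ∫ x, ∏ i, (∫ y, Real.exp (h i x y / ε) ∂νY) ^ q i ∂νX
        ≤ ∫ _, KY * Real.exp (M / ε) ∂νX := by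
          refine integral_mono_ae (hPhiInt hε) (integrable_const _) ?_
          filter_upwards [hGleM] with x hx
          refine le_trans (hPhiUB hε x) ?_
          gcongr
      _ = KX * (KY * Real.exp (M / ε)) := by rw [integral_const, smul_eq_mul]; rfl
  -- lower bound on the integral
  have hIntLB : ∀ δ : ℝ, 0 < δ → ∃ K : ℝ, 0 < K ∧ ∀ {ε : ℝ}, 0 < ε →
      K * Real.exp ((M - 2*δ) / ε)
        ≤ ∫ x, ∏ i, (∫ y, Real.exp (h i x y / ε) ∂νY) ^ q i ∂νX := by
    intro δ hδ
    have hA0 : νX {x | M - δ < G x} ≠ 0 := exceed_pos hX hGbd hδ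
    set E : Fin n → Set (X × Y) := fun i => {z | S i z.1 - δ < h i z.1 z.2} with hEdef
    have hEmeas : ∀ i, MeasurableSet (E i) := fun i =>
      measurableSet_lt (((hSmeas i).comp measurable_fst).sub measurable_const) (hmeas i)
    have hρmeas : ∀ i, Measurable fun x => νY (Prod.mk x ⁻¹' E i) := fun i =>
      measurable_measure_prodMk_left (hEmeas i)
    have hfiber : ∀ i x, Prod.mk x ⁻¹' E i = {y | S i x - δ < h i x y} := fun i x => rfl
    have hρpos : ∀ i x, νY (Prod.mk x ⁻¹' E i) ≠ 0 := by
      intro i x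
      rw [hfiber]
      exact exceed_pos hY (hbdd i x) hδ
    set A : ℕ → Set X := fun j =>
      {x | M - δ < G x} ∩ ⋂ i, {x | (((j : ℝ≥0∞) + 1))⁻¹ ≤ νY (Prod.mk x ⁻¹' E i)} with hAdef
    have hAmeas : ∀ j, MeasurableSet (A j) := fun j =>
      (measurableSet_lt measurable_const hGmeas).inter
        (MeasurableSet.iInter fun i => measurableSet_le measurable_const (hρmeas i))
    have hcover : {x | M - δ < G x} ⊆ ⋃ j, A j := by
      intro x hx
      have hex : ∀ i : Fin n, ∃ j : ℕ, ((j : ℝ≥0∞) + 1)⁻¹ ≤ νY (Prod.mk x ⁻¹' E i) := by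
        intro i
        obtain ⟨j, hj⟩ := ENNReal.exists_inv_nat_lt (hρpos i x)
        refine ⟨j, le_trans ?_ hj.le⟩
        exact ENNReal.inv_le_inv.2 (by exact_mod_cast le_of_lt (Nat.lt_succ_self j))
      choose jf hjf using hex
      refine Set.mem_iUnion.2 ⟨Finset.univ.sup jf, hx, Set.mem_iInter.2 fun i => ?_⟩
      refine le_trans ?_ (hjf i)
      refine ENNReal.inv_le_inv.2 ?_
      have : (jf i : ℝ≥0∞) ≤ (Finset.univ.sup jf : ℕ) := by
        exact_mod_cast Finset.le_sup (Finset.mem_univ i)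
      exact add_le_add_left this 1
    have hAj : ∃ j, νX (A j) ≠ 0 := by
      by_contra hall
      push_neg at hall
      refine hA0 (le_antisymm ?_ zero_le)
      refine le_trans (measure_mono hcover) ?_
      refine le_trans (measure_iUnion_le A) ?_
      simp [hall]
    obtain ⟨j, hj⟩ := hAj
    set c : ℝ := ((j : ℝ) + 1)⁻¹ with hcdef
    have hcpos : 0 < c := by positivity
    refine ⟨(νX (A j)).toReal * c,
      mul_pos (ENNReal.toReal_pos hj (measure_ne_top _ _)) hcpos, ?_⟩
    intro ε hε
    have hk : ∀ x ∈ A j,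
        c * Real.exp ((M - 2*δ) / ε) ≤ ∏ i, (∫ y, Real.exp (h i x y / ε) ∂νY) ^ q i := by
      intro x hx
      obtain ⟨hx1, hx2⟩ := hx
      have hinner : ∀ i : Fin n,
          c * Real.exp ((S i x - δ) / ε) ≤ ∫ y, Real.exp (h i x y / ε) ∂νY := by
        intro i
        have hBmeas : MeasurableSet (Prod.mk x ⁻¹' E i) :=
          measurable_prodMk_left (hEmeas i)
        have hmem : ((j : ℝ≥0∞) + 1)⁻¹ ≤ νY (Prod.mk x ⁻¹' E i) := by
          have := Set.mem_iInter.1 hx2 i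
          exact this
        have hcle : c ≤ (νY (Prod.mk x ⁻¹' E i)).toReal := by
          have h1 := ENNReal.toReal_mono (measure_ne_top _ _) hmem
          refine le_trans (le_of_eq ?_) h1
          rw [ENNReal.toReal_inv]
          congr 1
        have h2 : Real.exp ((S i x - δ) / ε) * (νY (Prod.mk x ⁻¹' E i)).toReal
            ≤ ∫ y in Prod.mk x ⁻¹' E i, Real.exp (h i x y / ε) ∂νY := by
          refine setIntegral_ge_of_const_le_real hBmeas (measure_ne_top _ _) (fun y hy => ?_)
            (hIntY hε i x).integrableOn
          rw [hfiber] at hy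
          exact Real.exp_le_exp.2 ((div_le_div_iff_of_pos_right hε).2 hy.le)
        have h3 : ∫ y in Prod.mk x ⁻¹' E i, Real.exp (h i x y / ε) ∂νY
            ≤ ∫ y, Real.exp (h i x y / ε) ∂νY :=
          setIntegral_le_integral (hIntY hε i x)
            (Filter.Eventually.of_forall fun y => (Real.exp_pos _).le)
        calc c * Real.exp ((S i x - δ) / ε)
            ≤ (νY (Prod.mk x ⁻¹' E i)).toReal * Real.exp ((S i x - δ) / ε) :=
              mul_le_mul_of_nonneg_right hcle (Real.exp_pos _).le
          _ = Real.exp ((S i x - δ) / ε) * (νY (Prod.mk x ⁻¹' E i)).toReal := mul_comm _ _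
          _ ≤ _ := le_trans h2 h3
      calc c * Real.exp ((M - 2*δ) / ε)
          ≤ c * Real.exp ((G x - δ) / ε) := by
            have : M - 2*δ ≤ G x - δ := by
              have := hx1
              simp only [Set.mem_setOf_eq] at this
              linarith
            gcongr
        _ = c ^ (∑ i, q i) * Real.exp (∑ i, q i * ((S i x - δ) / ε)) := by
            rw [hqsum, Real.rpow_one]
            have hsum : ∑ i, q i * ((S i x - δ) / ε) = (G x - δ) / ε := by
              simp_rw [← mul_div_assoc]
              rw [← Finset.sum_div]
              congr 1
              simp only [hGdef, mul_sub]
              rw [Finset.sum_sub_distrib, ← Finset.sum_mul, hqsum, one_mul]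
            rw [hsum]
        _ = ∏ i, (c * Real.exp ((S i x - δ) / ε)) ^ q i :=
            (prod_rpow_mul_exp q c hcpos _).symm
        _ ≤ ∏ i, (∫ y, Real.exp (h i x y / ε) ∂νY) ^ q i :=
            Finset.prod_le_prod
              (fun i _ => Real.rpow_nonneg
                (mul_nonneg hcpos.le (Real.exp_pos _).le) _)
              (fun i _ => Real.rpow_le_rpow
                (mul_nonneg hcpos.le (Real.exp_pos _).le) (hinner i) (hq i))
    calc (νX (A j)).toReal * c * Real.exp ((M - 2*δ) / ε)
        = (c * Real.exp ((M - 2*δ) / ε)) * (νX (A j)).toReal := by ring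
      _ ≤ ∫ x in A j, ∏ i, (∫ y, Real.exp (h i x y / ε) ∂νY) ^ q i ∂νX :=
          setIntegral_ge_of_const_le_real (hAmeas j) (measure_ne_top _ _) hk
            (hPhiInt hε).integrableOn
      _ ≤ ∫ x, ∏ i, (∫ y, Real.exp (h i x y / ε) ∂νY) ^ q i ∂νX :=
          setIntegral_le_integral (hPhiInt hε)
            (Filter.Eventually.of_forall fun x => hPhiNN ε x)
  -- positivity of the integral
  obtain ⟨K1, hK1pos, hK1⟩ := hIntLB 1 one_pos
  have hIntPos : ∀ {ε : ℝ}, 0 < ε →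
      0 < ∫ x, ∏ i, (∫ y, Real.exp (h i x y / ε) ∂νY) ^ q i ∂νX :=
    fun {ε} hε => lt_of_lt_of_le (mul_pos hK1pos (Real.exp_pos _)) (hK1 hε)
  -- upper bound on F
  have hFub : ∀ {ε : ℝ}, 0 < ε →
      ε * Real.log (∫ x, ∏ i, (∫ y, Real.exp (h i x y / ε) ∂νY) ^ q i ∂νX)
        ≤ ε * Real.log (KX * KY) + M := by
    intro ε hε
    have hlog : Real.log (∫ x, ∏ i, (∫ y, Real.exp (h i x y / ε) ∂νY) ^ q i ∂νX)
        ≤ Real.log (KX * KY) + M / ε := by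
      calc Real.log (∫ x, ∏ i, (∫ y, Real.exp (h i x y / ε) ∂νY) ^ q i ∂νX)
          ≤ Real.log (KX * (KY * Real.exp (M / ε))) :=
            Real.log_le_log (hIntPos hε) (hIntUB hε)
        _ = Real.log (KX * KY) + M / ε := by
            rw [show KX * (KY * Real.exp (M / ε)) = (KX * KY) * Real.exp (M / ε) by ring,
              Real.log_mul (by positivity) (Real.exp_ne_zero _), Real.log_exp]
    calc ε * Real.log (∫ x, ∏ i, (∫ y, Real.exp (h i x y / ε) ∂νY) ^ q i ∂νX)
        ≤ ε * (Real.log (KX * KY) + M / ε) := mul_le_mul_of_nonneg_left hlog hε.le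
      _ = ε * Real.log (KX * KY) + M := by
          rw [mul_add, mul_div_cancel₀ _ hε.ne']
  -- lower bound on F
  have hFlb : ∀ δ : ℝ, 0 < δ → ∃ c0 : ℝ, ∀ {ε : ℝ}, 0 < ε →
      ε * c0 + (M - 2*δ)
        ≤ ε * Real.log (∫ x, ∏ i, (∫ y, Real.exp (h i x y / ε) ∂νY) ^ q i ∂νX) := by
    intro δ hδ
    obtain ⟨K, hKpos, hK⟩ := hIntLB δ hδ
    refine ⟨Real.log K, fun {ε} hε => ?_⟩
    have hlog : Real.log K + (M - 2*δ) / ε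
        ≤ Real.log (∫ x, ∏ i, (∫ y, Real.exp (h i x y / ε) ∂νY) ^ q i ∂νX) := by
      calc Real.log K + (M - 2*δ) / ε
          = Real.log (K * Real.exp ((M - 2*δ) / ε)) := by
            rw [Real.log_mul hKpos.ne' (Real.exp_ne_zero _), Real.log_exp]
        _ ≤ _ := Real.log_le_log (mul_pos hKpos (Real.exp_pos _)) (hK hε)
    calc ε * Real.log K + (M - 2*δ)
        = ε * (Real.log K + (M - 2*δ) / ε) := by
          rw [mul_add, mul_div_cancel₀ _ hε.ne']
      _ ≤ ε * Real.log (∫ x, ∏ i, (∫ y, Real.exp (h i x y / ε) ∂νY) ^ q i ∂νX) :=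
          mul_le_mul_of_nonneg_left hlog hε.le
  -- conclusion
  have htends : ∀ c0 : ℝ, Tendsto (fun ε : ℝ => ε * c0) (nhdsWithin 0 (Set.Ioi 0)) (nhds 0) := by
    intro c0
    have : Tendsto (fun ε : ℝ => ε * c0) (nhds 0) (nhds (0 * c0)) :=
      (continuous_id.mul continuous_const).tendsto 0
    rw [zero_mul] at this
    exact this.mono_left nhdsWithin_le_nhds
  rw [tendsto_order]
  constructor
  · intro b hb
    have hδ : 0 < (M - b) / 4 := by linarith
    obtain ⟨c0, hc0⟩ := hFlb ((M - b) / 4) hδ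
    have h1 : ∀ᶠ ε in nhdsWithin (0:ℝ) (Set.Ioi 0), -((M - b) / 4) < ε * c0 :=
      (htends c0).eventually (eventually_gt_nhds (by linarith))
    filter_upwards [h1, self_mem_nhdsWithin] with ε hε1 hε2
    have := hc0 (Set.mem_Ioi.1 hε2)
    linarith
  · intro b hb
    have h1 : ∀ᶠ ε in nhdsWithin (0:ℝ) (Set.Ioi 0), ε * Real.log (KX * KY) < b - M :=
      (htends (Real.log (KX * KY))).eventually (eventually_lt_nhds (by linarith))
    filter_upwards [h1, self_mem_nhdsWithin] with ε hε1 hε2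
    have := hFub (Set.mem_Ioi.1 hε2)
    linarith
end

section
/- Let f : ℝ^{d} → ℝ^{m} be continuously differentiable, let x ∈ ℝ^{d}, and let x¹, …, x^N ∈ ℝ^{d}. For j ∈ {1,…,d} and k ∈ {1,…,m} define the empirical integrated gradient φ_{j,k} = (1/N) Σ_{i=1}^N (x_j − x_j^{i}) · ∫₀¹ (∂f_k/∂x_j)(x^{i} + α(x − x^{i})) dα. Then for every k ∈ {1,…,m}, f_k(x) − (1/N) Σ_{i=1}^N f_k(x^{i}) = Σ_{j=1}^{d} φ_{j,k}. -/
open scoped BigOperators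

lemma eig_basis_expand (d : ℕ) (v : EuclideanSpace ℝ (Fin d)) :
    v = ∑ j : Fin d, v j • EuclideanSpace.single j (1 : ℝ) := by
  ext j'
  rw [WithLp.ofLp_sum, Fintype.sum_apply]
  simp [EuclideanSpace.single_apply]

lemma eig_key (d m : ℕ)
    (f : EuclideanSpace ℝ (Fin d) → EuclideanSpace ℝ (Fin m))
    (hf : ContDiff ℝ 1 f) (a b : EuclideanSpace ℝ (Fin d)) (k : Fin m) :
    f b k - f a k =
      ∑ j : Fin d, (b j - a j) *
        ∫ α in (0 : ℝ)..1,
          fderiv ℝ (fun y => f y k) (a + α • (b - a))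
            (EuclideanSpace.single j 1) := by
  have hfk : ContDiff ℝ 1 (fun y => f y k) := contDiff_euclidean.mp hf k
  set L : ℝ → EuclideanSpace ℝ (Fin d) := fun α => a + α • (b - a) with hL
  have hLc : Continuous L := by continuity
  have hline : ∀ α : ℝ, HasDerivAt L (b - a) α := fun α => by
    simpa [hL] using ((hasDerivAt_id α).smul_const (b - a)).const_add a
  have hderiv : ∀ α : ℝ, HasDerivAt (fun t => f (L t) k)
      ((fderiv ℝ (fun y => f y k) (L α)) (b - a)) α := fun α =>
    ((hfk.differentiable one_ne_zero (L α)).hasFDerivAt).comp_hasDerivAt α (hline α)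
  have hcont : Continuous fun α => (fderiv ℝ (fun y => f y k) (L α)) (b - a) :=
    ((hfk.continuous_fderiv one_ne_zero).comp hLc).clm_apply continuous_const
  have hFTC : (∫ α in (0:ℝ)..1, (fderiv ℝ (fun y => f y k) (L α)) (b - a))
      = f (L 1) k - f (L 0) k :=
    intervalIntegral.integral_eq_sub_of_hasDerivAt (fun α _ => hderiv α)
      (hcont.intervalIntegrable 0 1)
  have hL1 : L 1 = b := by simp [hL]
  have hL0 : L 0 = a := by simp [hL]
  rw [hL1, hL0] at hFTC
  rw [← hFTC]
  have hexp : ∀ α : ℝ, (fderiv ℝ (fun y => f y k) (L α)) (b - a)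
      = ∑ j : Fin d, (b j - a j) *
          (fderiv ℝ (fun y => f y k) (L α)) (EuclideanSpace.single j 1) := by
    intro α
    conv_lhs => rw [eig_basis_expand d (b - a)]
    rw [map_sum]
    refine Finset.sum_congr rfl fun j _ => ?_
    have : (b - a) j = b j - a j := rfl
    rw [ContinuousLinearMap.map_smul, this, smul_eq_mul]
  rw [intervalIntegral.integral_congr (fun α _ => hexp α)]
  rw [intervalIntegral.integral_finset_sum]
  · refine Finset.sum_congr rfl fun j _ => ?_
    rw [intervalIntegral.integral_const_mul]
  · intro j _
    exact (continuous_const.mul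
      (((hfk.continuous_fderiv one_ne_zero).comp hLc).clm_apply
        continuous_const)).intervalIntegrable 0 1

/-- Empirical integrated gradient decomposition: for a continuously differentiable
`f : ℝ^d → ℝ^m`, a point `x`, and baseline points `x¹,…,x^N`, the empirical integrated
gradient attributions `φ_{j,k} = (1/N) Σ_i (x_j − x_j^i) ∫₀¹ (∂f_k/∂x_j)(x^i + α(x−x^i)) dα`
exactly decompose the deviation of the decision from the average baseline:
`f_k(x) − (1/N) Σ_i f_k(x^i) = Σ_j φ_{j,k}` for every `k`. -/
theorem eig_decomposition (d m N : ℕ) (hN : 0 < N)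
    (f : EuclideanSpace ℝ (Fin d) → EuclideanSpace ℝ (Fin m))
    (hf : ContDiff ℝ 1 f)
    (x : EuclideanSpace ℝ (Fin d)) (xs : Fin N → EuclideanSpace ℝ (Fin d)) :
    ∀ k : Fin m,
      f x k - (1 / (N : ℝ)) * ∑ i, f (xs i) k =
        ∑ j : Fin d, (1 / (N : ℝ)) * ∑ i,
          (x j - xs i j) *
            ∫ α in (0 : ℝ)..1,
              fderiv ℝ (fun y => f y k) (xs i + α • (x - xs i))
                (EuclideanSpace.single j 1) := by
  intro k
  have key : ∀ i : Fin N, f x k - f (xs i) k =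
      ∑ j : Fin d, (x j - xs i j) *
        ∫ α in (0 : ℝ)..1,
          fderiv ℝ (fun y => f y k) (xs i + α • (x - xs i))
            (EuclideanSpace.single j 1) :=
    fun i => eig_key d m f hf (xs i) x k
  have hNne : (N : ℝ) ≠ 0 := Nat.cast_ne_zero.mpr hN.ne'
  calc f x k - (1 / (N : ℝ)) * ∑ i, f (xs i) k
      = (1 / (N : ℝ)) * ∑ i : Fin N, (f x k - f (xs i) k) := by
        rw [Finset.sum_sub_distrib, mul_sub, Finset.sum_const, Finset.card_univ,
          Fintype.card_fin, nsmul_eq_mul]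
        field_simp
    _ = (1 / (N : ℝ)) * ∑ i : Fin N, ∑ j : Fin d, (x j - xs i j) *
          ∫ α in (0 : ℝ)..1,
            fderiv ℝ (fun y => f y k) (xs i + α • (x - xs i))
              (EuclideanSpace.single j 1) := by
        rw [Finset.sum_congr rfl fun i _ => key i]
    _ = _ := by
        rw [Finset.sum_comm, Finset.mul_sum]
end
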